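/- Let n ≥ 1, r ≥ 1, m > 0, c_1 ≥ 1, and let q̂_{ij} ∈ (0,1] for all i, j ∈ [n]. Let N ∈ ℝ^{n×n}, and let U ∈ ℝ^{n×r} have orthonormal columns satisfying ‖U^i‖² ≤ (c_1²·n/m)·q̂_{ij} for all i, j, where U^i is the i-th row of U. Let (δ_{ij})_{i,j∈[n]} be independent {0,1}-valued random variables with P(δ_{ij}=1) = q̂_{ij}, and let R be the random matrix with R_{ij} = δ_{ij}·N_{ij}/q̂_{ij}. Then for every δ > 0: P( ‖U^T R − U^T N‖ > δ·‖N‖_F ) ≤ c_1²·n/(m·δ²), where ‖·‖ is the spectral norm. -/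

import Mathlib

open Matrix MeasureTheory ProbabilityTheory

/-- Spectral norm (largest singular value) of a real matrix, as the operator
norm of the induced map between Euclidean spaces. -/
noncomputable def specNorm {n₁ n₂ : ℕ} (A : Matrix (Fin n₁) (Fin n₂) ℝ) : ℝ :=
  ‖LinearMap.toContinuousLinearMap (Matrix.toEuclideanLin A)‖

/-- Frobenius norm of a real matrix. -/
noncomputable def frobNorm {n₁ n₂ : ℕ} (A : Matrix (Fin n₁) (Fin n₂) ℝ) : ℝ :=
  Real.sqrt (∑ i, ∑ j, (A i j) ^ 2)

lemma specNorm_le_frobNorm {n₁ n₂ : ℕ} (A : Matrix (Fin n₁) (Fin n₂) ℝ) :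
    specNorm A ≤ frobNorm A := by
  unfold specNorm frobNorm
  apply ContinuousLinearMap.opNorm_le_bound _ (Real.sqrt_nonneg _)
  intro x
  have hTx : ‖(LinearMap.toContinuousLinearMap (Matrix.toEuclideanLin A)) x‖
      = Real.sqrt (∑ i, (∑ j, A i j * x j) ^ 2) := by
    rw [EuclideanSpace.norm_eq]
    congr 1
    refine Finset.sum_congr rfl fun i _ => ?_
    rw [Real.norm_eq_abs, sq_abs]
    rfl
  have hx : ‖x‖ = Real.sqrt (∑ j, (x j) ^ 2) := by
    rw [EuclideanSpace.norm_eq]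
    congr 1
    exact Finset.sum_congr rfl fun j _ => by rw [Real.norm_eq_abs, sq_abs]
  rw [hTx, hx, ← Real.sqrt_mul (by positivity)]
  apply Real.sqrt_le_sqrt
  rw [Finset.sum_mul]
  exact Finset.sum_le_sum fun i _ =>
    Finset.sum_mul_sq_le_sq_mul_sq Finset.univ (fun j => A i j) (fun j => x j)

theorem stmt14 {n r : ℕ} (hn : 1 ≤ n) (hr : 1 ≤ r) (m c1 : ℝ) (hm : 0 < m) (hc1 : 1 ≤ c1)
    (qhat : Fin n → Fin n → ℝ) (hq : ∀ i j, qhat i j ∈ Set.Ioc (0 : ℝ) 1)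
    (N : Matrix (Fin n) (Fin n) ℝ)
    (U : Matrix (Fin n) (Fin r) ℝ) (hU : Uᵀ * U = 1)
    (hub : ∀ i j, (∑ k, (U i k) ^ 2) ≤ (c1 ^ 2 * n / m) * qhat i j)
    {Ω : Type*} [MeasureSpace Ω] [IsProbabilityMeasure (ℙ : Measure Ω)]
    (X : Fin n × Fin n → Ω → ℝ)
    (hmeas : ∀ p, Measurable (X p))
    (hval : ∀ p ω, X p ω = 0 ∨ X p ω = 1)
    (hind : iIndepFun X ℙ)
    (hX : ∀ p, ℙ {ω | X p ω = 1} = ENNReal.ofReal (qhat p.1 p.2))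
    (δ : ℝ) (hδ : 0 < δ) :
    ℙ {ω | δ * frobNorm N <
        specNorm ((Matrix.of fun k j => ∑ i, U i k * (X (i, j) ω * N i j / qhat i j))
          - Uᵀ * N)} ≤
      ENNReal.ofReal (c1 ^ 2 * n / (m * δ ^ 2)) := by
  have hq0 : ∀ i j, 0 < qhat i j := fun i j => (hq i j).1
  have hq1 : ∀ i j, qhat i j ≤ 1 := fun i j => (hq i j).2
  set c : ℝ := c1 ^ 2 * n / m with hc
  have hn1 : (1 : ℝ) ≤ n := by exact_mod_cast hn
  have hc0 : 0 < c := by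
    rw [hc]; positivity
  by_cases hN0 : frobNorm N = 0
  · -- degenerate case: N = 0
    have hS : ∑ i, ∑ j, (N i j) ^ 2 ≤ 0 := Real.sqrt_eq_zero'.mp hN0
    have hN : ∀ i j, N i j = 0 := by
      intro i j
      have h1 : ∑ i, ∑ j, (N i j) ^ 2 = 0 :=
        le_antisymm hS (Finset.sum_nonneg fun _ _ => Finset.sum_nonneg fun _ _ => sq_nonneg _)
      have h2 : ∀ i ∈ Finset.univ, ∑ j, (N i j) ^ 2 = 0 :=
        (Finset.sum_eq_zero_iff_of_nonneg
          (fun _ _ => Finset.sum_nonneg fun _ _ => sq_nonneg _)).mp h1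
      have h3 : ∀ j ∈ Finset.univ, (N i j) ^ 2 = 0 :=
        (Finset.sum_eq_zero_iff_of_nonneg (fun _ _ => sq_nonneg _)).mp
          (h2 i (Finset.mem_univ i))
      exact (pow_eq_zero_iff two_ne_zero).mp (by simpa using h3 j (Finset.mem_univ j))
    have hset : {ω | δ * frobNorm N <
        specNorm ((Matrix.of fun k j => ∑ i, U i k * (X (i, j) ω * N i j / qhat i j))
          - Uᵀ * N)} = ∅ := by
      rw [Set.eq_empty_iff_forall_notMem]
      intro ω hω
      simp only [Set.mem_setOf_eq] at hω
      have hM : ((Matrix.of fun k j => ∑ i, U i k * (X (i, j) ω * N i j / qhat i j))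
          - Uᵀ * N) = 0 := by
        have hNz : N = 0 := by ext i j; exact hN i j
        rw [hNz]
        ext k j
        simp [hN]
      rw [hM, hN0] at hω
      have : specNorm (0 : Matrix (Fin r) (Fin n) ℝ) = 0 := by
        simp [specNorm]
      rw [this, mul_zero] at hω
      exact lt_irrefl 0 hω
    rw [hset]
    simp
  · -- main case
    set f : ℝ := frobNorm N with hfdef
    have hf0 : 0 < f := lt_of_le_of_ne (Real.sqrt_nonneg _) (Ne.symm hN0)
    have hf2 : f ^ 2 = ∑ i, ∑ j, (N i j) ^ 2 :=
      Real.sq_sqrt (Finset.sum_nonneg fun _ _ => Finset.sum_nonneg fun _ _ => sq_nonneg _)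
    -- centered variables
    set D : Fin n × Fin n → Ω → ℝ := fun p ω => X p ω - qhat p.1 p.2 with hD
    have hDmeas : ∀ p, Measurable (D p) := fun p => (hmeas p).sub measurable_const
    have hDbd : ∀ p ω, ‖D p ω‖ ≤ 1 := by
      intro p ω
      rw [Real.norm_eq_abs, abs_le]
      rcases hval p ω with h | h <;>
        constructor <;> simp only [hD, h] <;> nlinarith [hq0 p.1 p.2, hq1 p.1 p.2]
    have hXbd : ∀ p ω, ‖X p ω‖ ≤ 1 := by
      intro p ω
      rcases hval p ω with h | h <;> simp [h]
    have hXI : ∀ p, Integrable (X p) := fun p =>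
      Integrable.mono' (integrable_const 1) (hmeas p).aestronglyMeasurable
        (ae_of_all _ (hXbd p))
    have hDint : ∀ p, Integrable (D p) := fun p =>
      Integrable.mono' (integrable_const 1) (hDmeas p).aestronglyMeasurable
        (ae_of_all _ (hDbd p))
    have hDDint : ∀ p p', Integrable (fun ω => D p ω * D p' ω) := fun p p' =>
      Integrable.mono' (integrable_const 1)
        ((hDmeas p).mul (hDmeas p')).aestronglyMeasurable
        (ae_of_all _ fun ω => by
          rw [norm_mul]
          exact mul_le_one₀ (hDbd p ω) (norm_nonneg _) (hDbd p' ω))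
    have hXint : ∀ p, ∫ ω, X p ω = qhat p.1 p.2 := by
      intro p
      have hXeq : X p = Set.indicator {ω | X p ω = 1} (fun _ => (1 : ℝ)) := by
        funext ω
        rcases hval p ω with h | h
        · rw [h, Set.indicator_of_notMem]
          simp only [Set.mem_setOf_eq, h]
          norm_num
        · rw [h, Set.indicator_of_mem]
          exact h
      have hms : MeasurableSet {ω | X p ω = 1} := hmeas p (measurableSet_singleton 1)
      rw [hXeq, integral_indicator_const (1 : ℝ) hms, measureReal_def, hX p, smul_eq_mul, mul_one,
        ENNReal.toReal_ofReal (le_of_lt (hq0 p.1 p.2))]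
    have hDmean : ∀ p, ∫ ω, D p ω = 0 := by
      intro p
      simp only [hD]
      rw [integral_sub (hXI p) (integrable_const _), hXint p, integral_const,
        probReal_univ, one_smul, sub_self]
    have hDsq : ∀ p, ∫ ω, D p ω * D p ω ≤ qhat p.1 p.2 := by
      intro p
      have heq : (fun ω => D p ω * D p ω)
          = fun ω => (1 - 2 * qhat p.1 p.2) * X p ω + (qhat p.1 p.2) ^ 2 := by
        funext ω
        rcases hval p ω with h | h <;> simp only [hD, h] <;> ring
      rw [heq, integral_add ((hXI p).const_mul _) (integrable_const _),
        integral_const_mul, hXint p, integral_const, probReal_univ,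
        one_smul]
      nlinarith [hq0 p.1 p.2]
    have hcross : ∀ (i i' j : Fin n), i ≠ i' →
        ∫ ω, D (i, j) ω * D (i', j) ω = 0 := by
      intro i i' j hne
      have hpair : ((i, j) : Fin n × Fin n) ≠ (i', j) := by
        simp [hne]
      have hI : IndepFun (D (i, j)) (D (i', j)) ℙ :=
        (hind.indepFun hpair).comp (measurable_id.sub measurable_const)
          (measurable_id.sub measurable_const)
      have := hI.integral_mul_eq_mul_integral (hDmeas (i, j)).aestronglyMeasurable
        (hDmeas (i', j)).aestronglyMeasurable
      calc ∫ ω, D (i, j) ω * D (i', j) ω = ∫ ω, (D (i, j) * D (i', j)) ω := rfl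
        _ = (∫ ω, D (i, j) ω) * ∫ ω, D (i', j) ω := this
        _ = 0 := by rw [hDmean, zero_mul]
    -- coefficients
    set B : Fin r → Fin n → Fin n → ℝ := fun k j i => U i k * N i j / qhat i j with hB
    have key : ∀ (k : Fin r) (j : Fin n),
        Integrable (fun ω => (∑ i, B k j i * D (i, j) ω) ^ 2) ∧
        ∫ ω, (∑ i, B k j i * D (i, j) ω) ^ 2
          ≤ ∑ i, (U i k) ^ 2 * (N i j) ^ 2 / qhat i j := by
      intro k j
      have hexp : ∀ ω, (∑ i, B k j i * D (i, j) ω) ^ 2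
          = ∑ i, ∑ i', (B k j i * B k j i') * (D (i, j) ω * D (i', j) ω) := by
        intro ω
        rw [sq, Finset.sum_mul_sum]
        exact Finset.sum_congr rfl fun i _ => Finset.sum_congr rfl fun i' _ => by ring
      have hint : Integrable (fun ω => (∑ i, B k j i * D (i, j) ω) ^ 2) := by
        have : (fun ω => (∑ i, B k j i * D (i, j) ω) ^ 2)
            = fun ω => ∑ i, ∑ i', (B k j i * B k j i') * (D (i, j) ω * D (i', j) ω) :=
          funext hexp
        rw [this]
        exact integrable_finset_sum _ fun i _ =>
          integrable_finset_sum _ fun i' _ => (hDDint _ _).const_mul _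
      refine ⟨hint, ?_⟩
      have hI1 : ∫ ω, (∑ i, B k j i * D (i, j) ω) ^ 2
          = ∑ i, ∑ i', (B k j i * B k j i') * ∫ ω, D (i, j) ω * D (i', j) ω := by
        simp_rw [hexp]
        rw [integral_finset_sum _ fun i _ =>
          integrable_finset_sum _ fun i' _ => (hDDint _ _).const_mul _]
        refine Finset.sum_congr rfl fun i _ => ?_
        rw [integral_finset_sum _ fun i' _ => (hDDint _ _).const_mul _]
        exact Finset.sum_congr rfl fun i' _ => integral_const_mul _ _
      have hI2 : ∫ ω, (∑ i, B k j i * D (i, j) ω) ^ 2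
          = ∑ i, (B k j i) ^ 2 * ∫ ω, D (i, j) ω * D (i, j) ω := by
        rw [hI1]
        refine Finset.sum_congr rfl fun i _ => ?_
        rw [Finset.sum_eq_single i]
        · rw [sq]
        · intro i' _ hne
          rw [hcross i i' j (Ne.symm hne), mul_zero]
        · intro h
          exact absurd (Finset.mem_univ i) h
      rw [hI2]
      refine Finset.sum_le_sum fun i _ => ?_
      have h1 : ∫ ω, D (i, j) ω * D (i, j) ω ≤ qhat i j := hDsq (i, j)
      have hbsq : (B k j i) ^ 2 * qhat i j = (U i k) ^ 2 * (N i j) ^ 2 / qhat i j := by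
        have hne := (hq0 i j).ne'
        rw [hB]
        field_simp
      calc (B k j i) ^ 2 * ∫ ω, D (i, j) ω * D (i, j) ω
          ≤ (B k j i) ^ 2 * qhat i j := by
            exact mul_le_mul_of_nonneg_left h1 (sq_nonneg _)
        _ = (U i k) ^ 2 * (N i j) ^ 2 / qhat i j := hbsq
    -- entry identification
    have hentry : ∀ (ω : Ω) (k : Fin r) (j : Fin n),
        ((Matrix.of fun k j => ∑ i, U i k * (X (i, j) ω * N i j / qhat i j))
          - Uᵀ * N) k j = ∑ i, B k j i * D (i, j) ω := by
      intro ω k j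
      simp only [Matrix.sub_apply, Matrix.of_apply, Matrix.mul_apply,
        Matrix.transpose_apply]
      rw [← Finset.sum_sub_distrib]
      refine Finset.sum_congr rfl fun i _ => ?_
      have hne := (hq0 i j).ne'
      simp only [hB, hD]
      field_simp
    set Z : Ω → ℝ := fun ω => ∑ k, ∑ j, (∑ i, B k j i * D (i, j) ω) ^ 2 with hZ
    have hZint : Integrable Z :=
      integrable_finset_sum _ fun k _ => integrable_finset_sum _ fun j _ => (key k j).1
    have hZnonneg : ∀ ω, 0 ≤ Z ω := fun ω =>
      Finset.sum_nonneg fun _ _ => Finset.sum_nonneg fun _ _ => sq_nonneg _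
    have hZmean : ∫ ω, Z ω ≤ c * f ^ 2 := by
      have h1 : ∫ ω, Z ω = ∑ k, ∑ j, ∫ ω, (∑ i, B k j i * D (i, j) ω) ^ 2 := by
        simp only [hZ]
        rw [integral_finset_sum _ fun k _ =>
          integrable_finset_sum _ fun j _ => (key k j).1]
        exact Finset.sum_congr rfl fun k _ =>
          integral_finset_sum _ fun j _ => (key k j).1
      rw [h1]
      calc ∑ k, ∑ j, ∫ ω, (∑ i, B k j i * D (i, j) ω) ^ 2
          ≤ ∑ k, ∑ j, ∑ i, (U i k) ^ 2 * (N i j) ^ 2 / qhat i j :=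
            Finset.sum_le_sum fun k _ => Finset.sum_le_sum fun j _ => (key k j).2
        _ = ∑ j, ∑ i, (∑ k, (U i k) ^ 2) * ((N i j) ^ 2 / qhat i j) := by
            rw [Finset.sum_comm]
            refine Finset.sum_congr rfl fun j _ => ?_
            rw [Finset.sum_comm]
            refine Finset.sum_congr rfl fun i _ => ?_
            rw [Finset.sum_mul]
            exact Finset.sum_congr rfl fun k _ => by rw [mul_div_assoc]
        _ ≤ ∑ j, ∑ i, c * (N i j) ^ 2 := by
            refine Finset.sum_le_sum fun j _ => Finset.sum_le_sum fun i _ => ?_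
            have hqp := hq0 i j
            have hnn : (0 : ℝ) ≤ (N i j) ^ 2 / qhat i j := by positivity
            calc (∑ k, (U i k) ^ 2) * ((N i j) ^ 2 / qhat i j)
                ≤ (c * qhat i j) * ((N i j) ^ 2 / qhat i j) :=
                  mul_le_mul_of_nonneg_right (hub i j) hnn
              _ = c * (N i j) ^ 2 := by
                  field_simp
        _ = c * f ^ 2 := by
            simp_rw [← Finset.mul_sum]
            rw [hf2, Finset.sum_comm]
    -- Markov
    set a : ℝ := (δ * f) ^ 2 with ha
    have ha0 : (0 : ℝ) < a := by positivity
    have hsub : {ω | δ * f <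
        specNorm ((Matrix.of fun k j => ∑ i, U i k * (X (i, j) ω * N i j / qhat i j))
          - Uᵀ * N)} ⊆ {ω | a ≤ Z ω} := by
      intro ω hω
      simp only [Set.mem_setOf_eq] at hω ⊢
      have h2 : frobNorm ((Matrix.of fun k j =>
            ∑ i, U i k * (X (i, j) ω * N i j / qhat i j)) - Uᵀ * N)
          = Real.sqrt (Z ω) := by
        rw [frobNorm]
        congr 1
        exact Finset.sum_congr rfl fun k _ => Finset.sum_congr rfl fun j _ => by
          rw [hentry ω k j]
      have h3 : δ * f < Real.sqrt (Z ω) :=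
        lt_of_lt_of_le hω ((specNorm_le_frobNorm _).trans_eq h2)
      have h4 : (δ * f) ^ 2 < Z ω := (Real.lt_sqrt (by positivity)).mp h3
      exact le_of_lt h4
    have hmark := mul_meas_ge_le_integral_of_nonneg (ae_of_all _ hZnonneg) hZint a
    have hPle : (ℙ {ω | a ≤ Z ω}).toReal ≤ c / δ ^ 2 := by
      have h4 : a * (ℙ {ω | a ≤ Z ω}).toReal ≤ c * f ^ 2 := le_trans hmark hZmean
      have h5 : (ℙ {ω | a ≤ Z ω}).toReal ≤ c * f ^ 2 / a := by
        rw [le_div_iff₀ ha0]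
        linarith [h4, mul_comm a ((ℙ {ω | a ≤ Z ω}).toReal)]
      have h6 : c * f ^ 2 / a = c / δ ^ 2 := by
        rw [ha, mul_pow]
        field_simp
      rwa [h6] at h5
    calc ℙ {ω | δ * f <
        specNorm ((Matrix.of fun k j => ∑ i, U i k * (X (i, j) ω * N i j / qhat i j))
          - Uᵀ * N)}
        ≤ ℙ {ω | a ≤ Z ω} := measure_mono hsub
      _ = ENNReal.ofReal ((ℙ {ω | a ≤ Z ω}).toReal) :=
          (ENNReal.ofReal_toReal (measure_ne_top _ _)).symm
      _ ≤ ENNReal.ofReal (c / δ ^ 2) := ENNReal.ofReal_le_ofReal hPle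
      _ = ENNReal.ofReal (c1 ^ 2 * n / (m * δ ^ 2)) := by
          rw [hc, div_div]
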